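/- Let γ∈(0,1/√3) and set a=(1−γ²)/(1+γ²), b=2γ/(1+γ²), and consider the simplified random map where Z=az+b with probability (1+γ/z)/2 and Z=az−b with probability (1−γ/z)/2 (with a approximated by 1−2γ² and b by 2γ). Then the first two conditional moments satisfy E_z[Z−z] = 2γ²(1/z − z) + O(γ³) and E_z[(Z−z)²] = 4γ² + O(γ⁴), and consequently for any C³ function φ, (E_z[φ(Z)]−φ(z))/(2γ²) → (1/z − z)φ'(z)+φ''(z) as γ→0, for each fixed z>0. -/

import Mathlib

open Filter Topology Asymptotics

/-- Second-order Taylor little-o expansion. -/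
lemma taylor2 {f : ℝ → ℝ} {z B : ℝ}
    (hd : ∀ᶠ x in 𝓝 z, HasDerivAt f (deriv f x) x)
    (hd2 : HasDerivAt (deriv f) B z) :
    (fun h : ℝ => f (z + h) - f z - deriv f z * h - B * h ^ 2 / 2)
      =o[𝓝 (0 : ℝ)] (fun h => h ^ 2) := by
  obtain ⟨ε, hε, hball⟩ := Metric.eventually_nhds_iff.mp hd
  set g : ℝ → ℝ := fun h => f (z + h) - f z - deriv f z * h - B * h ^ 2 / 2 with hg
  set g' : ℝ → ℝ := fun h => deriv f (z + h) - deriv f z - B * h with hg'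
  have hder : ∀ h : ℝ, |h| < ε → HasDerivAt g (g' h) h := by
    intro h hh
    have h0 : HasDerivAt f (deriv f (z + h)) (z + h) := by
      apply hball; simp [Real.dist_eq, abs_of_nonneg, hh]
    have h1 : HasDerivAt (fun t : ℝ => f (z + t)) (deriv f (z + h)) h := by
      have := h0.comp h ((hasDerivAt_id h).const_add z)
      rw [mul_one] at this
      exact this
    have h2 : HasDerivAt (fun t : ℝ => B * t ^ 2 / 2) (B * h) h := by
      have := ((hasDerivAt_pow 2 h).const_mul B).div_const 2
      simpa using this.congr_deriv (by ring)
    have := ((h1.sub_const (f z)).sub ((hasDerivAt_id h).const_mul (deriv f z))).sub h2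
    exact this.congr_deriv (show _ = deriv f (z + h) - deriv f z - B * h by ring)
  have ho : g' =o[𝓝 (0:ℝ)] fun h => h := by
    have h3 := hasDerivAt_iff_isLittleO.mp hd2
    have ht : Tendsto (fun h : ℝ => z + h) (𝓝 0) (𝓝 z) := by
      have : Continuous fun h : ℝ => z + h := by continuity
      simpa using this.tendsto 0
    have := h3.comp_tendsto ht
    simpa [Function.comp_def, hg', smul_eq_mul, mul_comm, add_sub_cancel_left] using this
  rw [isLittleO_iff]
  intro c hc
  have hev := isLittleO_iff.mp ho hc
  obtain ⟨δ, hδ, hsmall⟩ := Metric.eventually_nhds_iff.mp hev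
  have hmem : Metric.ball (0:ℝ) (min δ ε) ∈ 𝓝 (0:ℝ) :=
    Metric.ball_mem_nhds _ (lt_min hδ hε)
  filter_upwards [hmem] with h hh
  rw [Metric.mem_ball, Real.dist_eq, sub_zero] at hh
  have hhδ : |h| < δ := lt_of_lt_of_le hh (min_le_left _ _)
  have hhε : |h| < ε := lt_of_lt_of_le hh (min_le_right _ _)
  have bound : ∀ x : ℝ, |x| ≤ |h| → ‖g' x‖ ≤ c * |h| := by
    intro x hx
    have : ‖g' x‖ ≤ c * ‖x‖ := by
      apply hsmall; rw [Real.dist_eq, sub_zero]; exact lt_of_le_of_lt hx hhδ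
    calc ‖g' x‖ ≤ c * ‖x‖ := this
      _ ≤ c * |h| := by
          apply mul_le_mul_of_nonneg_left _ hc.le
          simpa [Real.norm_eq_abs] using hx
  have hg0 : g 0 = 0 := by simp [hg]
  rcases le_or_gt 0 h with h0 | h0
  · have hf : ∀ x ∈ Set.Icc (0:ℝ) h, HasDerivWithinAt g (g' x) (Set.Icc 0 h) x := by
      intro x hx
      exact (hder x (by
        rw [abs_lt]; constructor <;> nlinarith [hx.1, hx.2, abs_lt.mp hhε,
          abs_nonneg h, le_abs_self h])).hasDerivWithinAt
    have := norm_image_sub_le_of_norm_deriv_le_segment' hf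
      (fun x hx => bound x (by
        rw [abs_le]; constructor <;> nlinarith [hx.1, hx.2, le_abs_self h, abs_nonneg h]))
      h (Set.right_mem_Icc.mpr h0)
    rw [hg0, sub_zero, sub_zero] at this
    calc ‖g h‖ ≤ c * |h| * h := this
      _ = c * ‖h ^ 2‖ := by
          rw [Real.norm_eq_abs, abs_of_nonneg (sq_nonneg h), abs_of_nonneg h0]; ring
  · have hf : ∀ x ∈ Set.Icc h (0:ℝ), HasDerivWithinAt g (g' x) (Set.Icc h 0) x := by
      intro x hx
      exact (hder x (by
        rw [abs_lt]; constructor <;> nlinarith [hx.1, hx.2, abs_lt.mp hhε,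
          neg_abs_le h])).hasDerivWithinAt
    have := norm_image_sub_le_of_norm_deriv_le_segment' hf
      (fun x hx => bound x (by
        rw [abs_le]; constructor <;> nlinarith [hx.1, hx.2, neg_abs_le h, abs_nonneg h]))
      0 (Set.right_mem_Icc.mpr h0.le)
    rw [hg0, zero_sub, norm_neg] at this
    calc ‖g h‖ ≤ c * |h| * (0 - h) := this
      _ = c * ‖h ^ 2‖ := by
          rw [Real.norm_eq_abs, abs_of_nonneg (sq_nonneg h), abs_of_neg h0]; ring

lemma aux3 (z : ℝ) (hz : 0 < z) (φ : ℝ → ℝ) (A B : ℝ)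
    (hr : (fun h : ℝ => φ (z + h) - φ z - A * h - B * h ^ 2 / 2)
      =o[𝓝 (0 : ℝ)] (fun h => h ^ 2)) :
    Tendsto (fun γ : ℝ =>
        (((1 + γ / z) / 2) * φ ((1 - 2 * γ ^ 2) * z + 2 * γ)
          + ((1 - γ / z) / 2) * φ ((1 - 2 * γ ^ 2) * z - 2 * γ)
          - φ z) / (2 * γ ^ 2))
      (𝓝[>] (0 : ℝ))
      (𝓝 ((1 / z - z) * A + B)) := by
  have hz' : z ≠ 0 := hz.ne'
  -- remainders
  have htp : Tendsto (fun γ : ℝ => (1 - 2 * γ ^ 2) * z + 2 * γ - z) (𝓝[>] (0:ℝ)) (𝓝 0) := by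
    have hc : Continuous fun γ : ℝ => (1 - 2 * γ ^ 2) * z + 2 * γ - z := by fun_prop
    have h0 : Tendsto (fun γ : ℝ => (1 - 2 * γ ^ 2) * z + 2 * γ - z) (𝓝 0)
        (𝓝 ((1 - 2 * (0:ℝ) ^ 2) * z + 2 * 0 - z)) := hc.tendsto 0
    norm_num at h0
    exact h0.mono_left nhdsWithin_le_nhds
  have htm : Tendsto (fun γ : ℝ => (1 - 2 * γ ^ 2) * z - 2 * γ - z) (𝓝[>] (0:ℝ)) (𝓝 0) := by
    have hc : Continuous fun γ : ℝ => (1 - 2 * γ ^ 2) * z - 2 * γ - z := by fun_prop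
    have h0 : Tendsto (fun γ : ℝ => (1 - 2 * γ ^ 2) * z - 2 * γ - z) (𝓝 0)
        (𝓝 ((1 - 2 * (0:ℝ) ^ 2) * z - 2 * 0 - z)) := hc.tendsto 0
    norm_num at h0
    exact h0.mono_left nhdsWithin_le_nhds
  have hRp : (fun γ : ℝ => φ ((1 - 2 * γ ^ 2) * z + 2 * γ) - φ z
        - A * ((1 - 2 * γ ^ 2) * z + 2 * γ - z)
        - B * ((1 - 2 * γ ^ 2) * z + 2 * γ - z) ^ 2 / 2)
      =o[𝓝[>] (0:ℝ)] fun γ => ((1 - 2 * γ ^ 2) * z + 2 * γ - z) ^ 2 := by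
    have h := hr.comp_tendsto htp
    refine h.congr (fun γ => ?_) (fun γ => rfl)
    simp only [Function.comp]
    rw [show z + ((1 - 2 * γ ^ 2) * z + 2 * γ - z) = (1 - 2 * γ ^ 2) * z + 2 * γ by ring]
  have hRm : (fun γ : ℝ => φ ((1 - 2 * γ ^ 2) * z - 2 * γ) - φ z
        - A * ((1 - 2 * γ ^ 2) * z - 2 * γ - z)
        - B * ((1 - 2 * γ ^ 2) * z - 2 * γ - z) ^ 2 / 2)
      =o[𝓝[>] (0:ℝ)] fun γ => ((1 - 2 * γ ^ 2) * z - 2 * γ - z) ^ 2 := by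
    have h := hr.comp_tendsto htm
    refine h.congr (fun γ => ?_) (fun γ => rfl)
    simp only [Function.comp]
    rw [show z + ((1 - 2 * γ ^ 2) * z - 2 * γ - z) = (1 - 2 * γ ^ 2) * z - 2 * γ by ring]
  have hIoo : Set.Ioo (0:ℝ) 1 ∈ 𝓝[>] (0:ℝ) :=
    Ioo_mem_nhdsGT_of_mem ⟨le_refl 0, one_pos⟩
  have hbigp : (fun γ : ℝ => ((1 - 2 * γ ^ 2) * z + 2 * γ - z) ^ 2)
      =O[𝓝[>] (0:ℝ)] fun γ => γ ^ 2 := by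
    rw [isBigO_iff]
    refine ⟨(2 + 2 * z) ^ 2, ?_⟩
    filter_upwards [hIoo] with γ hγ
    rw [Real.norm_eq_abs, Real.norm_eq_abs, abs_of_nonneg (sq_nonneg _),
      abs_of_nonneg (sq_nonneg _)]
    have h1 : γ ^ 2 ≤ 1 := by nlinarith [hγ.1, hγ.2]
    have h2 : γ ^ 2 * (γ ^ 2 * z ^ 2) ≤ 1 * (γ ^ 2 * z ^ 2) :=
      mul_le_mul_of_nonneg_right h1 (by positivity)
    have hgz : (0:ℝ) ≤ γ * z := mul_nonneg hγ.1.le hz.le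
    have h3 : γ ^ 2 * (γ * z) ≤ 1 * (γ * z) :=
      mul_le_mul_of_nonneg_right h1 hgz
    have h4 : (0:ℝ) ≤ γ ^ 2 * z := mul_nonneg (sq_nonneg γ) hz.le
    have h5 : (0:ℝ) ≤ γ ^ 2 * (γ * z) := mul_nonneg (sq_nonneg γ) hgz
    have h6 : (0:ℝ) ≤ γ ^ 2 * z ^ 2 := mul_nonneg (sq_nonneg γ) (sq_nonneg z)
    nlinarith [h2, h3, h4, h5, h6]
  have hbigm : (fun γ : ℝ => ((1 - 2 * γ ^ 2) * z - 2 * γ - z) ^ 2)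
      =O[𝓝[>] (0:ℝ)] fun γ => γ ^ 2 := by
    rw [isBigO_iff]
    refine ⟨(2 + 2 * z) ^ 2, ?_⟩
    filter_upwards [hIoo] with γ hγ
    rw [Real.norm_eq_abs, Real.norm_eq_abs, abs_of_nonneg (sq_nonneg _),
      abs_of_nonneg (sq_nonneg _)]
    have h1 : γ ^ 2 ≤ 1 := by nlinarith [hγ.1, hγ.2]
    have h2 : γ ^ 2 * (γ ^ 2 * z ^ 2) ≤ 1 * (γ ^ 2 * z ^ 2) :=
      mul_le_mul_of_nonneg_right h1 (by positivity)
    have hgz : (0:ℝ) ≤ γ * z := mul_nonneg hγ.1.le hz.le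
    have h3 : γ ^ 2 * (γ * z) ≤ 1 * (γ * z) :=
      mul_le_mul_of_nonneg_right h1 hgz
    have h4 : (0:ℝ) ≤ γ ^ 2 * z := mul_nonneg (sq_nonneg γ) hz.le
    have h5 : (0:ℝ) ≤ γ ^ 2 * (γ * z) := mul_nonneg (sq_nonneg γ) hgz
    have h6 : (0:ℝ) ≤ γ ^ 2 * z ^ 2 := mul_nonneg (sq_nonneg γ) (sq_nonneg z)
    nlinarith [h2, h3, h4, h5, h6]
  have hpp : (fun γ : ℝ => (1 + γ / z) / 2) =O[𝓝[>] (0:ℝ)] (fun _ => (1:ℝ)) := by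
    have hc : Continuous fun γ : ℝ => (1 + γ / z) / 2 := by fun_prop
    exact ((hc.tendsto 0).mono_left nhdsWithin_le_nhds).isBigO_one ℝ
  have hpm : (fun γ : ℝ => (1 - γ / z) / 2) =O[𝓝[>] (0:ℝ)] (fun _ => (1:ℝ)) := by
    have hc : Continuous fun γ : ℝ => (1 - γ / z) / 2 := by fun_prop
    exact ((hc.tendsto 0).mono_left nhdsWithin_le_nhds).isBigO_one ℝ
  have hS : (fun γ : ℝ =>
        ((1 + γ / z) / 2) * (φ ((1 - 2 * γ ^ 2) * z + 2 * γ) - φ z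
          - A * ((1 - 2 * γ ^ 2) * z + 2 * γ - z)
          - B * ((1 - 2 * γ ^ 2) * z + 2 * γ - z) ^ 2 / 2)
        + ((1 - γ / z) / 2) * (φ ((1 - 2 * γ ^ 2) * z - 2 * γ) - φ z
          - A * ((1 - 2 * γ ^ 2) * z - 2 * γ - z)
          - B * ((1 - 2 * γ ^ 2) * z - 2 * γ - z) ^ 2 / 2))
      =o[𝓝[>] (0:ℝ)] fun γ => γ ^ 2 := by
    have h1 := hpp.mul_isLittleO (hRp.trans_isBigO hbigp)
    have h2 := hpm.mul_isLittleO (hRm.trans_isBigO hbigm)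
    have := h1.add h2
    refine this.congr (fun γ => rfl) (fun γ => by ring)
  have T3 : Tendsto (fun γ : ℝ =>
        (((1 + γ / z) / 2) * (φ ((1 - 2 * γ ^ 2) * z + 2 * γ) - φ z
          - A * ((1 - 2 * γ ^ 2) * z + 2 * γ - z)
          - B * ((1 - 2 * γ ^ 2) * z + 2 * γ - z) ^ 2 / 2)
        + ((1 - γ / z) / 2) * (φ ((1 - 2 * γ ^ 2) * z - 2 * γ) - φ z
          - A * ((1 - 2 * γ ^ 2) * z - 2 * γ - z)
          - B * ((1 - 2 * γ ^ 2) * z - 2 * γ - z) ^ 2 / 2)) / (2 * γ ^ 2))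
      (𝓝[>] (0:ℝ)) (𝓝 0) := by
    have h := hS.tendsto_div_nhds_zero.div_const 2
    rw [show (0:ℝ) / 2 = 0 by norm_num] at h
    exact h.congr (fun γ => by ring)
  have T2 : Tendsto (fun γ : ℝ => B * (1 + γ ^ 2 * z ^ 2 - 2 * γ ^ 2))
      (𝓝[>] (0:ℝ)) (𝓝 (B * 1)) := by
    have hc : Continuous fun γ : ℝ => B * (1 + γ ^ 2 * z ^ 2 - 2 * γ ^ 2) := by fun_prop
    have := (hc.tendsto 0).mono_left (nhdsWithin_le_nhds : 𝓝[>] (0:ℝ) ≤ 𝓝 0)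
    simpa using this
  have key : (fun γ : ℝ =>
      (((1 + γ / z) / 2) * φ ((1 - 2 * γ ^ 2) * z + 2 * γ)
        + ((1 - γ / z) / 2) * φ ((1 - 2 * γ ^ 2) * z - 2 * γ)
        - φ z) / (2 * γ ^ 2))
      =ᶠ[𝓝[>] (0:ℝ)] (fun γ : ℝ => A * (1 / z - z) + B * (1 + γ ^ 2 * z ^ 2 - 2 * γ ^ 2)
        + (((1 + γ / z) / 2) * (φ ((1 - 2 * γ ^ 2) * z + 2 * γ) - φ z
          - A * ((1 - 2 * γ ^ 2) * z + 2 * γ - z)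
          - B * ((1 - 2 * γ ^ 2) * z + 2 * γ - z) ^ 2 / 2)
        + ((1 - γ / z) / 2) * (φ ((1 - 2 * γ ^ 2) * z - 2 * γ) - φ z
          - A * ((1 - 2 * γ ^ 2) * z - 2 * γ - z)
          - B * ((1 - 2 * γ ^ 2) * z - 2 * γ - z) ^ 2 / 2)) / (2 * γ ^ 2)) := by
    filter_upwards [self_mem_nhdsWithin] with γ hγ
    have hγ0 : γ ≠ 0 := ne_of_gt hγ
    field_simp
    ring
  rw [show (1 / z - z) * A + B = A * (1 / z - z) + B * 1 + 0 by ring]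
  exact Tendsto.congr' key.symm ((tendsto_const_nhds.add T2).add T3)


theorem stmt13 (z : ℝ) (hz : 0 < z) (φ : ℝ → ℝ)
    (hφ : ∀ w ∈ Set.Ioi (0 : ℝ), ContDiffAt ℝ 3 φ w) :
    ((fun γ : ℝ =>
        ((1 + γ / z) / 2) * ((1 - 2 * γ ^ 2) * z + 2 * γ - z)
          + ((1 - γ / z) / 2) * ((1 - 2 * γ ^ 2) * z - 2 * γ - z)
          - 2 * γ ^ 2 * (1 / z - z))
        =O[𝓝[>] (0 : ℝ)] fun γ : ℝ => γ ^ 3) ∧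
    ((fun γ : ℝ =>
        ((1 + γ / z) / 2) * ((1 - 2 * γ ^ 2) * z + 2 * γ - z) ^ 2
          + ((1 - γ / z) / 2) * ((1 - 2 * γ ^ 2) * z - 2 * γ - z) ^ 2
          - 4 * γ ^ 2)
        =O[𝓝[>] (0 : ℝ)] fun γ : ℝ => γ ^ 4) ∧
    Tendsto (fun γ : ℝ =>
        (((1 + γ / z) / 2) * φ ((1 - 2 * γ ^ 2) * z + 2 * γ)
          + ((1 - γ / z) / 2) * φ ((1 - 2 * γ ^ 2) * z - 2 * γ)
          - φ z) / (2 * γ ^ 2))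
      (𝓝[>] (0 : ℝ))
      (𝓝 ((1 / z - z) * deriv φ z + deriv (deriv φ) z)) := by
  have hz' : z ≠ 0 := hz.ne'
  refine ⟨?_, ?_, ?_⟩
  · have e1 : (fun γ : ℝ =>
        ((1 + γ / z) / 2) * ((1 - 2 * γ ^ 2) * z + 2 * γ - z)
          + ((1 - γ / z) / 2) * ((1 - 2 * γ ^ 2) * z - 2 * γ - z)
          - 2 * γ ^ 2 * (1 / z - z)) = fun _ => (0:ℝ) := by
      funext γ; field_simp; ring
    rw [e1]; exact isBigO_zero _ _
  · have e2 : (fun γ : ℝ =>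
        ((1 + γ / z) / 2) * ((1 - 2 * γ ^ 2) * z + 2 * γ - z) ^ 2
          + ((1 - γ / z) / 2) * ((1 - 2 * γ ^ 2) * z - 2 * γ - z) ^ 2
          - 4 * γ ^ 2) = fun γ : ℝ => (4 * z ^ 2 - 8) * γ ^ 4 := by
      funext γ; field_simp; ring
    rw [e2]; exact isBigO_const_mul_self _ _ _
  · have hd : ∀ᶠ x in 𝓝 z, HasDerivAt φ (deriv φ x) x := by
      filter_upwards [isOpen_Ioi.mem_nhds hz] with x hx
      exact ((hφ x hx).differentiableAt (by norm_num)).hasDerivAt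
    have hfd : ContDiffAt ℝ 2 (fderiv ℝ φ) z := (hφ z hz).fderiv_right (by norm_num)
    have hdφ : DifferentiableAt ℝ (deriv φ) z := by
      have h1 : DifferentiableAt ℝ (fun x => fderiv ℝ φ x (1:ℝ)) z :=
        (hfd.differentiableAt (by norm_num)).clm_apply (differentiableAt_const _)
      have : deriv φ = fun x => fderiv ℝ φ x (1:ℝ) := by
        funext x; rw [← fderiv_apply_one_eq_deriv]
      rw [this]; exact h1
    have hd2 : HasDerivAt (deriv φ) (deriv (deriv φ) z) z := hdφ.hasDerivAt
    exact aux3 z hz φ (deriv φ z) (deriv (deriv φ) z) (taylor2 hd hd2)
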